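/- Let G be a finite connected simple graph on vertex set V with |V| ≥ 2, let V₀ ⊆ V be nonempty, let g : V₀ → ℝ, let p ∈ (0,1) and q = 1 − p. If u, v : V → ℝ both solve the r-biased infinity Laplacian boundary problem, i.e., u(x) = v(x) = g(x) for x ∈ V₀, u(x) = p·max_{y∼x} u(y) + q·min_{y∼x} u(y) and v(x) = p·max_{y∼x} v(y) + q·min_{y∼x} v(y) for all x ∈ V∖V₀, then u = v. That is, the solution of the boundary problem is unique. -/
import Mathlib


/-- In a connected graph with at least two vertices every vertex has a neighbor. -/
lemma neighborFinset_nonempty_of_connected {V : Type*} [Fintype V]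
    (G : SimpleGraph V) [DecidableRel G.Adj]
    (hc : G.Connected) (h2 : 1 < Fintype.card V) (x : V) :
    (G.neighborFinset x).Nonempty := by
  obtain ⟨y, hy⟩ := Fintype.exists_ne_of_one_lt_card h2 x
  obtain ⟨w⟩ := hc.preconnected x y
  cases w with
  | nil => exact absurd rfl hy
  | cons h _ => exact ⟨_, (G.mem_neighborFinset x _).mpr h⟩

lemma stmt16_key {V : Type*} [Fintype V] [DecidableEq V]
    (G : SimpleGraph V) [DecidableRel G.Adj]
    (hcard : 1 < Fintype.card V) (hconn : G.Connected)
    (V₀ : Finset V) (hV₀ : V₀.Nonempty) (g : V → ℝ)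
    (p q : ℝ) (hp : p ∈ Set.Ioo (0 : ℝ) 1) (hq : q = 1 - p)
    (u v : V → ℝ)
    (hu₀ : ∀ x ∈ V₀, u x = g x) (hv₀ : ∀ x ∈ V₀, v x = g x)
    (hu : ∀ x ∉ V₀, u x =
      p * (G.neighborFinset x).sup'
            (neighborFinset_nonempty_of_connected G hconn hcard x) u
        + q * (G.neighborFinset x).inf'
            (neighborFinset_nonempty_of_connected G hconn hcard x) u)
    (hv : ∀ x ∉ V₀, v x =
      p * (G.neighborFinset x).sup'
            (neighborFinset_nonempty_of_connected G hconn hcard x) v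
        + q * (G.neighborFinset x).inf'
            (neighborFinset_nonempty_of_connected G hconn hcard x) v) :
    ∀ x, u x ≤ v x := by
  have hp0 : 0 < p := hp.1
  have hq0 : 0 < q := by rw [hq]; linarith [hp.2]
  have hpq : p + q = 1 := by rw [hq]; ring
  have hNV : Nonempty V := Fintype.card_pos_iff.mp (by omega)
  have hne : (Finset.univ : Finset V).Nonempty := Finset.univ_nonempty
  set w : V → ℝ := fun x => u x - v x with hw
  set M : ℝ := Finset.univ.sup' hne w with hM
  have hMle : ∀ x, w x ≤ M := fun x => Finset.le_sup' w (Finset.mem_univ x)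
  set A : Finset V := Finset.univ.filter (fun x => w x = M) with hAdef
  have hA : A.Nonempty := by
    obtain ⟨x, hx, he⟩ := Finset.exists_mem_eq_sup' hne w
    exact ⟨x, Finset.mem_filter.mpr ⟨hx, he.symm⟩⟩
  set Mu : ℝ := A.sup' hA u with hMudef
  set B : Finset V := A.filter (fun x => u x = Mu) with hBdef
  have hB : B.Nonempty := by
    obtain ⟨x, hx, he⟩ := Finset.exists_mem_eq_sup' hA u
    exact ⟨x, Finset.mem_filter.mpr ⟨hx, he.symm⟩⟩
  set mv : ℝ := B.inf' hB v with hmvdef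
  set C : Finset V := B.filter (fun x => v x = mv) with hCdef
  have hC : C.Nonempty := by
    obtain ⟨x, hx, he⟩ := Finset.exists_mem_eq_inf' hB v
    exact ⟨x, Finset.mem_filter.mpr ⟨hx, he.symm⟩⟩
  have memC : ∀ x, x ∈ C ↔ (w x = M ∧ u x = Mu ∧ v x = mv) := by
    intro x
    simp [hCdef, hBdef, hAdef, Finset.mem_filter, and_assoc]
  -- the propagation step
  have step : ∀ x, x ∈ C → x ∉ V₀ → ∀ y ∈ G.neighborFinset x, y ∈ C := by
    intro x hxC hx0 y hy
    obtain ⟨hxA, hxB, hxCv⟩ := (memC x).mp hxC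
    have hwx : u x - v x = M := hxA
    set N : Finset V := G.neighborFinset x with hNdef
    have hN : N.Nonempty := neighborFinset_nonempty_of_connected G hconn hcard x
    set Su : ℝ := N.sup' hN u with hSu
    set Iu : ℝ := N.inf' hN u with hIu
    set Sv : ℝ := N.sup' hN v with hSv
    set Iv : ℝ := N.inf' hN v with hIv
    have hux : u x = p * Su + q * Iu := hu x hx0
    have hvx : v x = p * Sv + q * Iv := hv x hx0
    obtain ⟨ys, hysN, hys⟩ := Finset.exists_mem_eq_sup' hN u
    obtain ⟨zi, hziN, hzi⟩ := Finset.exists_mem_eq_inf' hN v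
    rw [← hSu] at hys
    rw [← hIv] at hzi
    -- hys : Su = u ys, hzi : Iv = v zi
    have h1 : Su - Sv ≤ M := by
      have h1a : v ys ≤ Sv := Finset.le_sup' v hysN
      have h1b : u ys - v ys ≤ M := hMle ys
      linarith [hys]
    have h2 : Iu - Iv ≤ M := by
      have h2a : Iu ≤ u zi := Finset.inf'_le u hziN
      have h2b : u zi - v zi ≤ M := hMle zi
      linarith [hzi]
    have hM3 : M = p * (Su - Sv) + q * (Iu - Iv) := by
      linear_combination hux - hvx - hwx
    have hsum : p * M + q * M = M := by rw [← add_mul, hpq, one_mul]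
    have h1' : p * (Su - Sv) ≤ p * M := by nlinarith
    have h2' : q * (Iu - Iv) ≤ q * M := by nlinarith
    have hSuSv : Su - Sv = M :=
      mul_left_cancel₀ (ne_of_gt hp0) (by linarith)
    have hIuIv : Iu - Iv = M :=
      mul_left_cancel₀ (ne_of_gt hq0) (by linarith)
    obtain ⟨z0, hz0⟩ := hN
    have hIuSu : Iu ≤ Su := le_trans (Finset.inf'_le u hz0) (Finset.le_sup' u hz0)
    have hIvSv : Iv ≤ Sv := le_trans (Finset.inf'_le v hz0) (Finset.le_sup' v hz0)
    -- ys is in A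
    have hysA : ys ∈ A := by
      refine Finset.mem_filter.mpr ⟨Finset.mem_univ _, le_antisymm (hMle ys) ?_⟩
      have : v ys ≤ Sv := Finset.le_sup' v hysN
      simp only [hw]
      linarith [hys]
    have hSux : Su = u x := by
      have hle : u ys ≤ Mu := Finset.le_sup' u hysA
      have hq1 : q * Iu ≤ q * Su := mul_le_mul_of_nonneg_left hIuSu hq0.le
      have hps : p * Su + q * Su = Su := by linear_combination Su * hpq
      have hge : u x ≤ Su := by linarith
      linarith [hys, hxB]
    have hIux : Iu = u x :=
      mul_left_cancel₀ (ne_of_gt hq0)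
        (by linear_combination (-1 : ℝ) * hux + (-p) * hSux + (-(u x)) * hq)
    -- zi is in B
    have hziA : zi ∈ A := by
      refine Finset.mem_filter.mpr ⟨Finset.mem_univ _, le_antisymm (hMle zi) ?_⟩
      have : Iu ≤ u zi := Finset.inf'_le u hziN
      simp only [hw]
      linarith [hzi]
    have huzi : u zi = Mu := by
      have ha : Iu ≤ u zi := Finset.inf'_le u hziN
      have hb : u zi ≤ Su := Finset.le_sup' u hziN
      rw [← hxB]; linarith [hIux, hSux]
    have hziB : zi ∈ B := Finset.mem_filter.mpr ⟨hziA, huzi⟩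
    have hIvx : Iv = v x := by
      have ha : mv ≤ v zi := Finset.inf'_le v hziB
      have hp1 : p * Iv ≤ p * Sv := mul_le_mul_of_nonneg_left hIvSv hp0.le
      have hpi : p * Iv + q * Iv = Iv := by linear_combination Iv * hpq
      have hb : Iv ≤ v x := by linarith
      linarith [hzi, hxCv]
    have hSvx : Sv = v x :=
      mul_left_cancel₀ (ne_of_gt hp0)
        (by linear_combination (-1 : ℝ) * hvx + (-q) * hIvx + (-(v x)) * hq)
    -- now all neighbors agree
    have huy : u y = u x := by
      have ha : Iu ≤ u y := Finset.inf'_le u hy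
      have hb : u y ≤ Su := Finset.le_sup' u hy
      linarith [hIux, hSux]
    have hvy : v y = v x := by
      have ha : Iv ≤ v y := Finset.inf'_le v hy
      have hb : v y ≤ Sv := Finset.le_sup' v hy
      linarith [hIvx, hSvx]
    refine (memC y).mpr ⟨?_, ?_, ?_⟩
    · simp only [hw]; linarith [hwx]
    · rw [huy]; exact hxB
    · rw [hvy]; exact hxCv
  -- walk to the boundary
  have hwalk : ∀ (b x : V), G.Walk x b → b ∈ V₀ → x ∈ C → ∃ c, c ∈ C ∧ c ∈ V₀ := by
    intro b x wlk
    induction wlk with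
    | nil => intro hb hx; exact ⟨_, hx, hb⟩
    | @cons a a' b h wlk' ih =>
      intro hb hx
      by_cases ha : a ∈ V₀
      · exact ⟨a, hx, ha⟩
      · exact ih hb (step a hx ha a' ((G.mem_neighborFinset a a').mpr h))
  obtain ⟨x0, hx0⟩ := hC
  obtain ⟨b, hb⟩ := hV₀
  obtain ⟨wlk⟩ := hconn.preconnected x0 b
  obtain ⟨c, hcC, hcV⟩ := hwalk b x0 wlk hb hx0
  have hwc : w c = M := ((memC c).mp hcC).1
  have hM0 : M = 0 := by
    rw [← hwc]
    simp only [hw]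
    rw [hu₀ c hcV, hv₀ c hcV]
    ring
  intro x
  have := hMle x
  simp only [hw] at this
  linarith [hM0]

/-- uniqueness of the solution of the `r`-biased infinity Laplacian
boundary problem: if `u` and `v` both agree with `g` on `V₀` and satisfy
`w(x) = p ⬝ max_{y∼x} w(y) + q ⬝ min_{y∼x} w(y)` for all `x ∉ V₀`, then `u = v`. -/
theorem stmt_16 {V : Type*} [Fintype V] [DecidableEq V]
    (G : SimpleGraph V) [DecidableRel G.Adj]
    (hcard : 1 < Fintype.card V) (hconn : G.Connected)
    (V₀ : Finset V) (hV₀ : V₀.Nonempty) (g : V → ℝ)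
    (p q : ℝ) (hp : p ∈ Set.Ioo (0 : ℝ) 1) (hq : q = 1 - p)
    (u v : V → ℝ)
    (hu₀ : ∀ x ∈ V₀, u x = g x) (hv₀ : ∀ x ∈ V₀, v x = g x)
    (hu : ∀ x ∉ V₀, u x =
      p * (G.neighborFinset x).sup'
            (neighborFinset_nonempty_of_connected G hconn hcard x) u
        + q * (G.neighborFinset x).inf'
            (neighborFinset_nonempty_of_connected G hconn hcard x) u)
    (hv : ∀ x ∉ V₀, v x =
      p * (G.neighborFinset x).sup'
            (neighborFinset_nonempty_of_connected G hconn hcard x) v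
        + q * (G.neighborFinset x).inf'
            (neighborFinset_nonempty_of_connected G hconn hcard x) v) :
    u = v := by
  funext x
  exact le_antisymm
    (stmt16_key G hcard hconn V₀ hV₀ g p q hp hq u v hu₀ hv₀ hu hv x)
    (stmt16_key G hcard hconn V₀ hV₀ g p q hp hq v u hv₀ hu₀ hv hu x)
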